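/- Let i < j be integers, n an integer, and g a decreasing convex function on [i, j+1] satisfying |g(z) − g(w)| ≤ |z − w|/2 for all z, w, and such that n+1 ≥ g(i+1) ≥ … ≥ g(j) ≥ n ≥ g(j+1). Then (1/2)⌊g(i)+1/4⌋ + Σ_{m=i+1}^{j−1} ⌊g(m)+1/4⌋ + (1/2)⌊g(j)+1/4⌋ ≤ ∫_i^j g(z) dz. -/

import Mathlib

open MeasureTheory intervalIntegral Set

set_option maxHeartbeats 1000000 in
theorem stmt6 (i j n : ℤ) (hij : i < j) (g : ℝ → ℝ)
    (hanti : AntitoneOn g (Set.Icc (i : ℝ) (j + 1)))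
    (hconv : ConvexOn ℝ (Set.Icc (i : ℝ) (j + 1)) g)
    (hlip : ∀ z ∈ Set.Icc (i : ℝ) (j + 1), ∀ w ∈ Set.Icc (i : ℝ) (j + 1),
      |g z - g w| ≤ |z - w| / 2)
    (h1 : g (i + 1) ≤ (n : ℝ) + 1)
    (h2 : (n : ℝ) ≤ g (j : ℝ))
    (h3 : g ((j : ℝ) + 1) ≤ (n : ℝ)) :
    (1 / 2 : ℝ) * ⌊g (i : ℝ) + 1 / 4⌋ +
      (∑ m ∈ Finset.Icc (i + 1) (j - 1), (⌊g (m : ℝ) + 1 / 4⌋ : ℝ)) +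
      (1 / 2 : ℝ) * ⌊g (j : ℝ) + 1 / 4⌋ ≤ ∫ z in (i : ℝ)..(j : ℝ), g z := by
  have hij' : (i : ℝ) < j := by exact_mod_cast hij
  have hij1 : (i : ℝ) + 1 ≤ j := by
    have : (i : ℝ) + 1 ≤ j ↔ ((i + 1 : ℤ) : ℝ) ≤ ((j : ℤ) : ℝ) := by push_cast; constructor <;> intro <;> linarith
    rw [this]; exact_mod_cast hij
  -- membership helper
  have hmem : ∀ z : ℝ, (i : ℝ) ≤ z → z ≤ (j : ℝ) + 1 → z ∈ Set.Icc (i : ℝ) (j + 1) :=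
    fun z hz1 hz2 => ⟨hz1, hz2⟩
  -- continuity & integrability
  have hcont : ContinuousOn g (Set.Icc (i : ℝ) (j + 1)) := by
    have hL : LipschitzOnWith (2⁻¹ : NNReal) g (Set.Icc (i : ℝ) (j + 1)) := by
      apply LipschitzOnWith.of_dist_le_mul
      intro x hx y hy
      have h := hlip x hx y hy
      rw [Real.dist_eq, Real.dist_eq]
      have hc : ((2⁻¹ : NNReal) : ℝ) = 1 / 2 := by norm_num
      rw [hc]; linarith
    exact hL.continuousOn
  have hIg : ∀ a b : ℝ, (i : ℝ) ≤ a → a ≤ b → b ≤ (j : ℝ) + 1 →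
      IntervalIntegrable g volume a b := by
    intro a b ha hab hb
    apply ContinuousOn.intervalIntegrable
    apply hcont.mono
    rw [Set.uIcc_of_le hab]
    exact Set.Icc_subset_Icc ha hb
  -- g ≥ n on [i, j]
  have hgen : ∀ z : ℝ, (i : ℝ) ≤ z → z ≤ (j : ℝ) → (n : ℝ) ≤ g z := by
    intro z hz1 hz2
    exact le_trans h2 (hanti (hmem z hz1 (by linarith)) (hmem j (by linarith) (by linarith)) hz2)
  -- floor helper
  have hfl : ∀ (r : ℝ) (z : ℤ), r < (z : ℝ) + 1 → (⌊r⌋ : ℝ) ≤ (z : ℝ) := by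
    intro r z h
    have h1 : ⌊r⌋ < z + 1 := Int.floor_lt.mpr (by push_cast; linarith)
    have h2 : ⌊r⌋ ≤ z := by omega
    exact_mod_cast h2
  -- Lipschitz corollaries
  have hgi_le : g (i : ℝ) ≤ (n : ℝ) + 3 / 2 := by
    have h := hlip (i : ℝ) (hmem i le_rfl (by linarith)) ((i : ℝ) + 1)
      (hmem _ (by linarith) (by linarith))
    rw [abs_le] at h
    have habs : |(i : ℝ) - ((i : ℝ) + 1)| = 1 := by rw [abs_sub_comm]; norm_num
    rw [habs] at h
    linarith [h.2]
  have hgj_le : g (j : ℝ) ≤ (n : ℝ) + 1 / 2 := by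
    have h := hlip (j : ℝ) (hmem j (by linarith) (by linarith)) ((j : ℝ) + 1)
      (hmem _ (by linarith) (by linarith))
    rw [abs_le] at h
    have habs : |(j : ℝ) - ((j : ℝ) + 1)| = 1 := by rw [abs_sub_comm]; norm_num
    rw [habs] at h
    linarith [h.2]
  -- linear integral computation
  have hlin : ∀ a b C s : ℝ, (∫ z in a..b, (C - s * z)) = C * (b - a) - s * (b ^ 2 - a ^ 2) / 2 := by
    intro a b C s
    have hint1 : IntervalIntegrable (fun _ : ℝ => C) volume a b := intervalIntegrable_const
    have hint2 : IntervalIntegrable (fun z : ℝ => s * z) volume a b :=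
      (continuous_const.mul continuous_id).intervalIntegrable a b
    rw [intervalIntegral.integral_sub hint1 hint2, intervalIntegral.integral_const,
      intervalIntegral.integral_const_mul, integral_id]
    simp only [smul_eq_mul]
    ring
  have hlinInt : ∀ a b C s : ℝ, IntervalIntegrable (fun z : ℝ => C - s * z) volume a b :=
    fun a b C s => (continuous_const.sub (continuous_const.mul continuous_id)).intervalIntegrable a b
  -- floor bound at j
  have hAj : (⌊g (j : ℝ) + 1 / 4⌋ : ℝ) ≤ (n : ℝ) := hfl _ n (by linarith)
  -- floor bound at i
  have hAi : (⌊g (i : ℝ) + 1 / 4⌋ : ℝ) ≤ (n : ℝ) + 1 := by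
    have := hfl (g (i : ℝ) + 1 / 4) (n + 1) (by push_cast; linarith)
    push_cast at this
    linarith
  by_cases hK0 : (n : ℝ) + 3 / 4 ≤ g (i : ℝ)
  case neg =>
    -- all floors ≤ n ; integral ≥ n (j - i)
    push_neg at hK0
    have hAi' : (⌊g (i : ℝ) + 1 / 4⌋ : ℝ) ≤ (n : ℝ) := hfl _ n (by linarith)
    have hsum : (∑ m ∈ Finset.Icc (i + 1) (j - 1), (⌊g (m : ℝ) + 1 / 4⌋ : ℝ)) ≤
        ((j : ℝ) - i - 1) * n := by
      have hbd : ∀ m ∈ Finset.Icc (i + 1) (j - 1), (⌊g (m : ℝ) + 1 / 4⌋ : ℝ) ≤ (n : ℝ) := by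
        intro m hm
        rw [Finset.mem_Icc] at hm
        have hmi : (i : ℝ) ≤ (m : ℝ) := by exact_mod_cast (by omega : i ≤ m)
        have hmj : (m : ℝ) ≤ (j : ℝ) + 1 := by exact_mod_cast (by omega : m ≤ j + 1)
        have hgm : g (m : ℝ) ≤ g (i : ℝ) :=
          hanti (hmem i le_rfl (by linarith)) (hmem m hmi hmj) hmi
        exact hfl _ n (by linarith)
      calc (∑ m ∈ Finset.Icc (i + 1) (j - 1), (⌊g (m : ℝ) + 1 / 4⌋ : ℝ))
          ≤ ∑ _m ∈ Finset.Icc (i + 1) (j - 1), (n : ℝ) := Finset.sum_le_sum hbd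
        _ = ((Finset.Icc (i + 1) (j - 1)).card : ℝ) * n := by
            rw [Finset.sum_const, nsmul_eq_mul]
        _ = ((j : ℝ) - i - 1) * n := by
            rw [Int.card_Icc]
            have h2 : ((j - 1 + 1 - (i + 1)).toNat : ℝ) = ((j - 1 + 1 - (i + 1) : ℤ) : ℝ) := by
              exact_mod_cast Int.toNat_of_nonneg (by omega : (0:ℤ) ≤ j - 1 + 1 - (i + 1))
            rw [h2]; push_cast; ring
    have hint : (n : ℝ) * ((j : ℝ) - i) ≤ ∫ z in (i : ℝ)..(j : ℝ), g z := by
      have hmono := intervalIntegral.integral_mono_on (le_of_lt hij')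
        (_root_.intervalIntegrable_const (c := (n : ℝ)))
        (hIg i j le_rfl (le_of_lt hij') (by linarith))
        (fun x hx => hgen x hx.1 hx.2)
      rw [intervalIntegral.integral_const, smul_eq_mul] at hmono
      linarith
    linarith
  case pos =>
    -- K := largest m in [i, j-1] with g m ≥ n + 3/4
    have hexists : ∃ K : ℤ, (i ≤ K ∧ K ≤ j - 1) ∧ ((n : ℝ) + 3 / 4 ≤ g (K : ℝ)) ∧
        ∀ m : ℤ, K < m → m ≤ j - 1 → g (m : ℝ) < (n : ℝ) + 3 / 4 := by
      classical
      set T : Finset ℤ := (Finset.Icc i (j - 1)).filter (fun m => (n : ℝ) + 3 / 4 ≤ g (m : ℝ))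
        with hT
      have hiT : i ∈ T := by
        rw [hT, Finset.mem_filter, Finset.mem_Icc]
        exact ⟨⟨le_rfl, by omega⟩, hK0⟩
      have hTne : T.Nonempty := ⟨i, hiT⟩
      have hKT := T.max'_mem hTne
      have hKT' := Finset.mem_filter.mp hKT
      have hKT'' := Finset.mem_Icc.mp hKT'.1
      refine ⟨T.max' hTne, hKT'', hKT'.2, ?_⟩
      intro m hm1 hm2
      by_contra hcon
      push_neg at hcon
      have hmT : m ∈ T := by
        rw [hT]
        exact Finset.mem_filter.mpr ⟨Finset.mem_Icc.mpr ⟨by omega, hm2⟩, hcon⟩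
      have hle : m ≤ T.max' hTne := Finset.le_max' T m hmT
      omega
    obtain ⟨K, ⟨hiK, hKj⟩, hgK, hmax⟩ := hexists
    -- cast facts
    have hiKR : (i : ℝ) ≤ (K : ℝ) := by exact_mod_cast hiK
    have hKjR : (K : ℝ) ≤ (j : ℝ) - 1 := by exact_mod_cast (by omega : K ≤ j - 1)
    -- LHS bound
    have hsum : (∑ m ∈ Finset.Icc (i + 1) (j - 1), (⌊g (m : ℝ) + 1 / 4⌋ : ℝ)) ≤
        ((K : ℝ) - i) * ((n : ℝ) + 1) + ((j : ℝ) - 1 - K) * n := by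
      have hsplit : Finset.Icc (i + 1) (j - 1) = Finset.Ioc i K ∪ Finset.Ioc K (j - 1) := by
        rw [Finset.Ioc_union_Ioc_eq_Ioc hiK hKj]
        ext x; simp only [Finset.mem_Icc, Finset.mem_Ioc]; omega
      have hdisj : Disjoint (Finset.Ioc i K) (Finset.Ioc K (j - 1)) := by
        rw [Finset.disjoint_left]
        intro a ha hb
        rw [Finset.mem_Ioc] at ha hb
        omega
      rw [hsplit, Finset.sum_union hdisj]
      have hcard1 : ((Finset.Ioc i K).card : ℝ) = (K : ℝ) - i := by
        rw [Int.card_Ioc]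
        have h1 : ((K - i).toNat : ℝ) = ((K - i : ℤ) : ℝ) := by
          exact_mod_cast Int.toNat_of_nonneg (by omega : (0 : ℤ) ≤ K - i)
        rw [h1]; push_cast; ring
      have hcard2 : ((Finset.Ioc K (j - 1)).card : ℝ) = (j : ℝ) - 1 - K := by
        rw [Int.card_Ioc]
        have h1 : ((j - 1 - K).toNat : ℝ) = ((j - 1 - K : ℤ) : ℝ) := by
          exact_mod_cast Int.toNat_of_nonneg (by omega : (0 : ℤ) ≤ j - 1 - K)
        rw [h1]; push_cast; ring
      have hs1 : (∑ m ∈ Finset.Ioc i K, (⌊g (m : ℝ) + 1 / 4⌋ : ℝ)) ≤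
          ((K : ℝ) - i) * ((n : ℝ) + 1) := by
        have hbd : ∀ m ∈ Finset.Ioc i K, (⌊g (m : ℝ) + 1 / 4⌋ : ℝ) ≤ (n : ℝ) + 1 := by
          intro m hm
          rw [Finset.mem_Ioc] at hm
          have hmi : (i : ℝ) + 1 ≤ (m : ℝ) := by
            have : ((i + 1 : ℤ) : ℝ) ≤ (m : ℝ) := by exact_mod_cast (by omega : i + 1 ≤ m)
            push_cast at this; linarith
          have hmj : (m : ℝ) ≤ (j : ℝ) + 1 := by exact_mod_cast (by omega : m ≤ j + 1)
          have hgm : g (m : ℝ) ≤ g ((i : ℝ) + 1) :=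
            hanti (hmem _ (by linarith) (by linarith)) (hmem m (by linarith) hmj) hmi
          have := hfl (g (m : ℝ) + 1 / 4) (n + 1) (by push_cast; linarith)
          push_cast at this
          linarith
        calc (∑ m ∈ Finset.Ioc i K, (⌊g (m : ℝ) + 1 / 4⌋ : ℝ))
            ≤ ∑ _m ∈ Finset.Ioc i K, ((n : ℝ) + 1) := Finset.sum_le_sum hbd
          _ = ((Finset.Ioc i K).card : ℝ) * ((n : ℝ) + 1) := by
              rw [Finset.sum_const, nsmul_eq_mul]
          _ = ((K : ℝ) - i) * ((n : ℝ) + 1) := by rw [hcard1]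
      have hs2 : (∑ m ∈ Finset.Ioc K (j - 1), (⌊g (m : ℝ) + 1 / 4⌋ : ℝ)) ≤
          ((j : ℝ) - 1 - K) * n := by
        have hbd : ∀ m ∈ Finset.Ioc K (j - 1), (⌊g (m : ℝ) + 1 / 4⌋ : ℝ) ≤ (n : ℝ) := by
          intro m hm
          rw [Finset.mem_Ioc] at hm
          have := hmax m hm.1 hm.2
          exact hfl _ n (by linarith)
        calc (∑ m ∈ Finset.Ioc K (j - 1), (⌊g (m : ℝ) + 1 / 4⌋ : ℝ))
            ≤ ∑ _m ∈ Finset.Ioc K (j - 1), (n : ℝ) := Finset.sum_le_sum hbd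
          _ = ((Finset.Ioc K (j - 1)).card : ℝ) * (n : ℝ) := by
              rw [Finset.sum_const, nsmul_eq_mul]
          _ = ((j : ℝ) - 1 - K) * n := by rw [hcard2]
      linarith
    -- key integral bound
    have key : (n : ℝ) * ((j : ℝ) - i) + ((K : ℝ) - i) + 1 / 2 ≤ ∫ z in (i : ℝ)..(j : ℝ), g z := by
      rcases eq_or_lt_of_le hiK with hKi | hKi
      · -- Case I : K = i
        have hKR : (K : ℝ) = (i : ℝ) := by exact_mod_cast hKi.symm
        have hsplit := intervalIntegral.integral_add_adjacent_intervals
          (hIg i (i + 1) le_rfl (by linarith) (by linarith))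
          (hIg (i + 1) j (by linarith) (by linarith) (by linarith))
        have hlow : ∀ z ∈ Set.Icc (i : ℝ) ((i : ℝ) + 1),
            (g (i : ℝ) + (i : ℝ) / 2) - (1 / 2) * z ≤ g z := by
          intro z hz
          have hzmem : z ∈ Set.Icc (i : ℝ) ((j : ℝ) + 1) := ⟨hz.1, by linarith [hz.2]⟩
          have h := hlip (i : ℝ) (hmem i le_rfl (by linarith)) z hzmem
          rw [abs_le] at h
          have habs : |(i : ℝ) - z| = z - i := by
            rw [abs_sub_comm]; exact abs_of_nonneg (by linarith [hz.1])
          rw [habs] at h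
          linarith [h.2]
        have hI1 : g (i : ℝ) - 1 / 4 ≤ ∫ z in (i : ℝ)..((i : ℝ) + 1), g z := by
          have hmono := intervalIntegral.integral_mono_on (by linarith : (i : ℝ) ≤ (i : ℝ) + 1)
            (hlinInt i (i + 1) (g (i : ℝ) + (i : ℝ) / 2) (1 / 2))
            (hIg i (i + 1) le_rfl (by linarith) (by linarith)) hlow
          rw [hlin] at hmono
          have hr : (g (i : ℝ) + (i : ℝ) / 2) * (((i : ℝ) + 1) - i) -
              (1 / 2) * ((((i : ℝ) + 1) ^ 2 - (i : ℝ) ^ 2)) / 2 = g (i : ℝ) - 1 / 4 := by ring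
          linarith [hr]
        have hI2 : (n : ℝ) * ((j : ℝ) - ((i : ℝ) + 1)) ≤ ∫ z in ((i : ℝ) + 1)..(j : ℝ), g z := by
          have hmono := intervalIntegral.integral_mono_on (by linarith : (i : ℝ) + 1 ≤ j)
            (_root_.intervalIntegrable_const (c := (n : ℝ)))
            (hIg (i + 1) j (by linarith) (by linarith) (by linarith))
            (fun x hx => hgen x (by linarith [hx.1]) hx.2)
          rw [intervalIntegral.integral_const, smul_eq_mul] at hmono
          linarith
        have hre : (n : ℝ) * ((j : ℝ) - i) = (n : ℝ) * ((j : ℝ) - ((i : ℝ) + 1)) + n := by ring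
        rw [hKR]
        linarith [hK0]
      · -- i < K
        have hiK1 : (i : ℝ) + 1 ≤ (K : ℝ) := by
          have h := (by exact_mod_cast (by omega : i + 1 ≤ K) : ((i + 1 : ℤ) : ℝ) ≤ ((K : ℤ) : ℝ))
          push_cast at h; linarith
        by_cases hLd : 2 * K ≤ i + j
        · -- Case II : reflection of [i, K] fits inside [i, j]
          have ha2j : 2 * (K : ℝ) - i ≤ (j : ℝ) := by
            have h := (by exact_mod_cast (by omega : 2 * K - i ≤ j) :
              ((2 * K - i : ℤ) : ℝ) ≤ ((j : ℤ) : ℝ))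
            push_cast at h; linarith
          have hIntRefl : IntervalIntegrable (fun x => g (2 * (K : ℝ) - x)) volume (i : ℝ) (K : ℝ) := by
            apply ContinuousOn.intervalIntegrable
            apply hcont.comp ((continuous_const.sub continuous_id).continuousOn)
            intro x hx
            rw [Set.uIcc_of_le hiKR] at hx
            exact ⟨by simp only [Pi.sub_apply, id_eq]; linarith [hx.2], by simp only [Pi.sub_apply, id_eq]; linarith [hx.1]⟩
          have hrefl : (∫ x in (i : ℝ)..(K : ℝ), g (2 * (K : ℝ) - x)) =
              ∫ x in (K : ℝ)..(2 * (K : ℝ) - i), g x := by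
            have h := intervalIntegral.integral_comp_sub_left (a := (i : ℝ)) (b := (K : ℝ)) g
              (2 * (K : ℝ))
            rw [show 2 * (K : ℝ) - (K : ℝ) = (K : ℝ) by ring] at h
            exact h
          have hmid : ∀ x ∈ Set.Icc (i : ℝ) (K : ℝ), 2 * g (K : ℝ) ≤ g x + g (2 * (K : ℝ) - x) := by
            intro x hx
            have hx1 : x ∈ Set.Icc (i : ℝ) ((j : ℝ) + 1) := ⟨hx.1, by linarith [hx.2, hKjR]⟩
            have hx2 : 2 * (K : ℝ) - x ∈ Set.Icc (i : ℝ) ((j : ℝ) + 1) :=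
              ⟨by linarith [hx.2, hiKR], by linarith [hx.1]⟩
            have H := hconv.2 hx1 hx2 (by norm_num : (0 : ℝ) ≤ 1 / 2)
              (by norm_num : (0 : ℝ) ≤ 1 / 2) (by norm_num)
            simp only [smul_eq_mul] at H
            rw [show 1 / 2 * x + 1 / 2 * (2 * (K : ℝ) - x) = (K : ℝ) by ring] at H
            linarith
          have hIiK := hIg i K le_rfl hiKR (by linarith)
          have hsum2 : (∫ x in (i : ℝ)..(K : ℝ), (g x + g (2 * (K : ℝ) - x))) =
              (∫ x in (i : ℝ)..(K : ℝ), g x) + ∫ x in (K : ℝ)..(2 * (K : ℝ) - i), g x := by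
            rw [intervalIntegral.integral_add hIiK hIntRefl, hrefl]
          have hlb : ((K : ℝ) - i) * (2 * g (K : ℝ)) ≤
              ∫ x in (i : ℝ)..(K : ℝ), (g x + g (2 * (K : ℝ) - x)) := by
            have hmono := intervalIntegral.integral_mono_on hiKR
              (_root_.intervalIntegrable_const (c := 2 * g (K : ℝ))) (hIiK.add hIntRefl) hmid
            rw [intervalIntegral.integral_const, smul_eq_mul] at hmono
            linarith
          have htail : (n : ℝ) * ((j : ℝ) - (2 * (K : ℝ) - i)) ≤
              ∫ x in (2 * (K : ℝ) - i)..(j : ℝ), g x := by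
            have hmono := intervalIntegral.integral_mono_on (by linarith : 2 * (K : ℝ) - i ≤ j)
              (_root_.intervalIntegrable_const (c := (n : ℝ)))
              (hIg (2 * (K : ℝ) - i) j (by linarith) (by linarith) (by linarith))
              (fun x hx => hgen x (by linarith [hx.1, hiKR]) hx.2)
            rw [intervalIntegral.integral_const, smul_eq_mul] at hmono
            linarith
          have hsplit1 := intervalIntegral.integral_add_adjacent_intervals hIiK
            (hIg K (2 * (K : ℝ) - i) hiKR (by linarith) (by linarith))
          have hsplit2 := intervalIntegral.integral_add_adjacent_intervals
            (hIg i (2 * (K : ℝ) - i) le_rfl (by linarith) (by linarith))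
            (hIg (2 * (K : ℝ) - i) j (by linarith) (by linarith) (by linarith))
          have e1 : (2 * (n : ℝ) + 3 / 2) * ((K : ℝ) - i) ≤ (2 * g (K : ℝ)) * ((K : ℝ) - i) :=
            mul_le_mul_of_nonneg_right (by linarith) (by linarith)
          have e2 : (2 * (n : ℝ) + 3 / 2) * ((K : ℝ) - i) =
              2 * (n : ℝ) * ((K : ℝ) - i) + 3 / 2 * ((K : ℝ) - i) := by ring
          have e3 : (n : ℝ) * ((j : ℝ) - i) =
              (n : ℝ) * ((j : ℝ) - (2 * (K : ℝ) - i)) + 2 * (n : ℝ) * ((K : ℝ) - i) := by ring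
          have e5 : ((K : ℝ) - i) * (2 * g (K : ℝ)) = (2 * g (K : ℝ)) * ((K : ℝ) - i) := by ring
          linarith
        · -- Case III : reflection of [2K - j, j] about K, slope bound on the left
          push_neg at hLd
          have hbi : (i : ℝ) + 1 ≤ 2 * (K : ℝ) - j := by
            have h := (by exact_mod_cast (by omega : i + 1 ≤ 2 * K - j) :
              ((i + 1 : ℤ) : ℝ) ≤ ((2 * K - j : ℤ) : ℝ))
            push_cast at h; linarith
          have hbK : 2 * (K : ℝ) - j ≤ (K : ℝ) - 1 := by linarith [hKjR]
          have hIntRefl : IntervalIntegrable (fun x => g (2 * (K : ℝ) - x)) volume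
              (2 * (K : ℝ) - j) (K : ℝ) := by
            apply ContinuousOn.intervalIntegrable
            apply hcont.comp ((continuous_const.sub continuous_id).continuousOn)
            intro x hx
            rw [Set.uIcc_of_le (by linarith : 2 * (K : ℝ) - j ≤ (K : ℝ))] at hx
            exact ⟨by simp only [Pi.sub_apply, id_eq]; linarith [hx.2, hiKR], by simp only [Pi.sub_apply, id_eq]; linarith [hx.1]⟩
          have hrefl : (∫ x in (2 * (K : ℝ) - j)..(K : ℝ), g (2 * (K : ℝ) - x)) =
              ∫ x in (K : ℝ)..(j : ℝ), g x := by
            have h := intervalIntegral.integral_comp_sub_left (a := 2 * (K : ℝ) - j)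
              (b := (K : ℝ)) g (2 * (K : ℝ))
            rw [show 2 * (K : ℝ) - (K : ℝ) = (K : ℝ) by ring,
              show 2 * (K : ℝ) - (2 * (K : ℝ) - j) = (j : ℝ) by ring] at h
            exact h
          have hmid : ∀ x ∈ Set.Icc (2 * (K : ℝ) - j) (K : ℝ),
              2 * g (K : ℝ) ≤ g x + g (2 * (K : ℝ) - x) := by
            intro x hx
            have hx1 : x ∈ Set.Icc (i : ℝ) ((j : ℝ) + 1) :=
              ⟨by linarith [hx.1], by linarith [hx.2, hKjR]⟩
            have hx2 : 2 * (K : ℝ) - x ∈ Set.Icc (i : ℝ) ((j : ℝ) + 1) :=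
              ⟨by linarith [hx.2, hiKR], by linarith [hx.1]⟩
            have H := hconv.2 hx1 hx2 (by norm_num : (0 : ℝ) ≤ 1 / 2)
              (by norm_num : (0 : ℝ) ≤ 1 / 2) (by norm_num)
            simp only [smul_eq_mul] at H
            rw [show 1 / 2 * x + 1 / 2 * (2 * (K : ℝ) - x) = (K : ℝ) by ring] at H
            linarith
          have hIbK := hIg (2 * (K : ℝ) - j) K (by linarith) (by linarith) (by linarith)
          have hsum2 : (∫ x in (2 * (K : ℝ) - j)..(K : ℝ), (g x + g (2 * (K : ℝ) - x))) =
              (∫ x in (2 * (K : ℝ) - j)..(K : ℝ), g x) + ∫ x in (K : ℝ)..(j : ℝ), g x := by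
            rw [intervalIntegral.integral_add hIbK hIntRefl, hrefl]
          have hlb : ((K : ℝ) - (2 * (K : ℝ) - j)) * (2 * g (K : ℝ)) ≤
              (∫ x in (2 * (K : ℝ) - j)..(K : ℝ), (g x + g (2 * (K : ℝ) - x))) := by
            have hmono := intervalIntegral.integral_mono_on
              (by linarith : 2 * (K : ℝ) - j ≤ (K : ℝ))
              (_root_.intervalIntegrable_const (c := 2 * g (K : ℝ))) (hIbK.add hIntRefl) hmid
            rw [intervalIntegral.integral_const, smul_eq_mul] at hmono
            linarith
          -- slope bound on [i, 2K - j]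
          set s : ℝ := (g (K : ℝ) - g ((j : ℝ) + 1)) / ((j : ℝ) + 1 - K) with hsdef
          have hden : (0 : ℝ) < (j : ℝ) + 1 - K := by linarith [hKjR]
          have hsl : 3 / 4 ≤ s * ((j : ℝ) + 1 - K) := by
            rw [hsdef, div_mul_cancel₀ _ (ne_of_gt hden)]
            linarith
          have hs0 : 0 ≤ s := le_of_lt (div_pos (by linarith) hden)
          have hlowL : ∀ z ∈ Set.Icc (i : ℝ) (2 * (K : ℝ) - j),
              (g (K : ℝ) + s * (K : ℝ)) - s * z ≤ g z := by
            intro z hz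
            have hzK : z < (K : ℝ) := by linarith [hz.2]
            have hA := hconv.slope_mono_adjacent (hmem z hz.1 (by linarith [hz.2]))
              (hmem ((j : ℝ) + 1) (by linarith) le_rfl) hzK (by linarith [hKjR])
            have hrhs : (g ((j : ℝ) + 1) - g (K : ℝ)) / ((j : ℝ) + 1 - (K : ℝ)) = -s := by
              rw [hsdef]; ring
            rw [hrhs] at hA
            have hKz : (0 : ℝ) < (K : ℝ) - z := by linarith
            have h' := (div_le_iff₀ hKz).mp hA
            linarith
          have hIlow : (g (K : ℝ) + s * (K : ℝ)) * ((2 * (K : ℝ) - j) - i) -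
              s * ((2 * (K : ℝ) - j) ^ 2 - (i : ℝ) ^ 2) / 2 ≤
              ∫ z in (i : ℝ)..(2 * (K : ℝ) - j), g z := by
            have hmono := intervalIntegral.integral_mono_on (by linarith : (i : ℝ) ≤ 2 * (K : ℝ) - j)
              (hlinInt i (2 * (K : ℝ) - j) (g (K : ℝ) + s * (K : ℝ)) s)
              (hIg i (2 * (K : ℝ) - j) le_rfl (by linarith) (by linarith)) hlowL
            rw [hlin] at hmono
            linarith
          have hsplit1 := intervalIntegral.integral_add_adjacent_intervals hIbK
            (hIg K j hiKR (by linarith [hKjR]) (by linarith))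
          have hsplit2 := intervalIntegral.integral_add_adjacent_intervals
            (hIg i (2 * (K : ℝ) - j) le_rfl (by linarith) (by linarith))
            (hIg (2 * (K : ℝ) - j) j (by linarith) (by linarith) (by linarith))
          have hsl' : 3 / 4 ≤ s * (((j : ℝ) - K) + 1) := by
            rw [show (((j : ℝ) - K) + 1) = ((j : ℝ) + 1 - K) by ring]
            exact hsl
          have huv : ((j : ℝ) - K) + 1 ≤ (K : ℝ) - i := by linarith
          have hv1 : 1 ≤ (j : ℝ) - K := by linarith [hKjR]
          have hfinal : (n : ℝ) * (((K : ℝ) - i) + ((j : ℝ) - K)) + ((K : ℝ) - i) + 1 / 2 ≤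
              g (K : ℝ) * (((K : ℝ) - i) - ((j : ℝ) - K)) +
              s * (((K : ℝ) - i) ^ 2 - ((j : ℝ) - K) ^ 2) / 2 +
              2 * g (K : ℝ) * ((j : ℝ) - K) := by
            nlinarith [mul_le_mul_of_nonneg_right hgK
                (by linarith : (0 : ℝ) ≤ ((K : ℝ) - i) + ((j : ℝ) - K)),
              mul_nonneg hs0 (by linarith : (0 : ℝ) ≤ ((K : ℝ) - i) - ((j : ℝ) - K)),
              mul_nonneg (mul_nonneg hs0
                  (by linarith : (0 : ℝ) ≤ ((K : ℝ) - i) - ((j : ℝ) - K)))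
                (by linarith : (0 : ℝ) ≤ ((K : ℝ) - i) + ((j : ℝ) - K) - (((j : ℝ) - K) + 1)),
              mul_le_mul_of_nonneg_right hsl'
                (by linarith : (0 : ℝ) ≤ ((K : ℝ) - i) - ((j : ℝ) - K))]
          have hr1 : g (K : ℝ) * (((K : ℝ) - i) - ((j : ℝ) - K)) +
              s * (((K : ℝ) - i) ^ 2 - ((j : ℝ) - K) ^ 2) / 2 =
              (g (K : ℝ) + s * (K : ℝ)) * ((2 * (K : ℝ) - j) - i) -
              s * ((2 * (K : ℝ) - j) ^ 2 - (i : ℝ) ^ 2) / 2 := by ring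
          have hr2 : 2 * g (K : ℝ) * ((j : ℝ) - K) =
              ((K : ℝ) - (2 * (K : ℝ) - j)) * (2 * g (K : ℝ)) := by ring
          have hr3 : (n : ℝ) * ((j : ℝ) - i) = (n : ℝ) * (((K : ℝ) - i) + ((j : ℝ) - K)) := by ring
          linarith

    linarith
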